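/- Under the stated assumptions, the function v := m + Q satisfies the difference equation v(w) − v(w + 3πi) = G₂(w) and the automorphy relation v(−w + πi) = v(w) at every point where all the terms are defined; moreover (w − p₁)·v(w) tends to i as w → p₁ (w ≠ p₁) and (w − (−p₁ − πi))·v(w) tends to i as w → −p₁ − πi (w ≠ −p₁ − πi). (The function v̂₁¹ = m + Q is the h₁-automorphic solution of the difference equation for Φ = 3π/2 with residues i at p₁ and at −p₁ − πi.) -/

import Mathlib

open Complex Filter Topology

/-- The complex hyperbolic cotangent. -/
noncomputable def Complex.coth (z : ℂ) : ℂ := Complex.cosh z / Complex.sinh z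

lemma sinh_add_pi_I (z : ℂ) : Complex.sinh (z + Real.pi * I) = - Complex.sinh z := by
  rw [Complex.sinh_add]
  have h1 : Complex.sinh ((Real.pi : ℂ) * I) = 0 := by
    rw [Complex.sinh_mul_I, ← Complex.ofReal_sin, Real.sin_pi]; simp
  have h2 : Complex.cosh ((Real.pi : ℂ) * I) = -1 := by
    rw [Complex.cosh_mul_I, ← Complex.ofReal_cos, Real.cos_pi]; simp
  rw [h1, h2]; ring

lemma cosh_add_pi_I (z : ℂ) : Complex.cosh (z + Real.pi * I) = - Complex.cosh z := by
  rw [Complex.cosh_add]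
  have h1 : Complex.sinh ((Real.pi : ℂ) * I) = 0 := by
    rw [Complex.sinh_mul_I, ← Complex.ofReal_sin, Real.sin_pi]; simp
  have h2 : Complex.cosh ((Real.pi : ℂ) * I) = -1 := by
    rw [Complex.cosh_mul_I, ← Complex.ofReal_cos, Real.cos_pi]; simp
  rw [h1, h2]; ring

lemma coth_add_pi_I (z : ℂ) : Complex.coth (z + Real.pi * I) = Complex.coth z := by
  unfold Complex.coth; rw [sinh_add_pi_I, cosh_add_pi_I, neg_div_neg_eq]

lemma coth_neg (z : ℂ) : Complex.coth (-z) = - Complex.coth z := by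
  unfold Complex.coth; rw [Complex.sinh_neg, Complex.cosh_neg, div_neg]

lemma sinh_re_ne_zero {z : ℂ} (h : z.re ≠ 0) : Complex.sinh z ≠ 0 := by
  intro h0
  have : Complex.sin (z * I) = 0 := by rw [Complex.sin_mul_I, h0, zero_mul]
  rw [Complex.sin_eq_zero_iff] at this
  obtain ⟨n, hn⟩ := this
  have hz : z = -(n * Real.pi) * I := by
    have := congrArg (fun t => t * (-I)) hn
    have hII : I * -I = 1 := by simp [Complex.I_mul_I]
    rw [mul_assoc, hII, mul_one] at this
    rw [this]; ring
  apply h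
  rw [hz]
  simp


lemma tendsto_div_sinh : Tendsto (fun z : ℂ => z / Complex.sinh z) (𝓝[≠] 0) (𝓝 1) := by
  have h := Complex.hasDerivAt_sinh 0
  rw [Complex.cosh_zero, hasDerivAt_iff_tendsto_slope] at h
  have h2 := h.inv₀ one_ne_zero
  rw [inv_one] at h2
  refine h2.congr fun z => ?_
  rw [slope_def_field]
  simp [Complex.sinh_zero, inv_div]

lemma tendsto_sub_punctured (c : ℂ) : Tendsto (fun w : ℂ => w - c) (𝓝[≠] c) (𝓝[≠] 0) := by
  rw [tendsto_nhdsWithin_iff]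
  constructor
  · have h : Tendsto (fun w : ℂ => w - c) (𝓝 c) (𝓝 (c - c)) :=
      (continuous_id.sub continuous_const).tendsto c
    rw [sub_self] at h
    exact h.mono_left nhdsWithin_le_nhds
  · filter_upwards [self_mem_nhdsWithin] with w hw
    simp only [Set.mem_compl_iff, Set.mem_singleton_iff] at hw ⊢
    exact sub_ne_zero.mpr hw

lemma tendsto_div3_punctured : Tendsto (fun z : ℂ => z / 3) (𝓝[≠] (0:ℂ)) (𝓝[≠] 0) := by
  rw [tendsto_nhdsWithin_iff]
  constructor
  · have h : Tendsto (fun z : ℂ => z / 3) (𝓝 0) (𝓝 ((0:ℂ) / 3)) :=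
      (continuous_id.div_const 3).tendsto (0:ℂ)
    rw [zero_div] at h
    exact h.mono_left nhdsWithin_le_nhds
  · filter_upwards [self_mem_nhdsWithin] with w hw
    simp only [Set.mem_compl_iff, Set.mem_singleton_iff] at hw ⊢
    exact div_ne_zero hw (by norm_num)

lemma tendsto_div_sinh_sub (c : ℂ) :
    Tendsto (fun w : ℂ => (w - c) / Complex.sinh (w - c)) (𝓝[≠] c) (𝓝 1) :=
  tendsto_div_sinh.comp (tendsto_sub_punctured c)

lemma tendsto_mul_coth (c : ℂ) :
    Tendsto (fun w : ℂ => (w - c) * Complex.coth ((w - c) / 3)) (𝓝[≠] c) (𝓝 3) := by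
  have h1 : Tendsto (fun w : ℂ => ((w - c)/3) / Complex.sinh ((w - c)/3)) (𝓝[≠] c) (𝓝 1) :=
    tendsto_div_sinh.comp (tendsto_div3_punctured.comp (tendsto_sub_punctured c))
  have h2 : Tendsto (fun w : ℂ => Complex.cosh ((w - c)/3)) (𝓝[≠] c) (𝓝 1) := by
    have : ContinuousAt (fun w : ℂ => Complex.cosh ((w - c)/3)) c := by fun_prop
    have h3 := this.tendsto.mono_left (nhdsWithin_le_nhds (s := {c}ᶜ) (a := c))
    simpa using h3
  have h4 := (h1.mul h2).const_mul (3 : ℂ)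
  have h5 : (3:ℂ) * (1 * 1) = 3 := by norm_num
  rw [h5] at h4
  refine h4.congr fun w => ?_
  unfold Complex.coth
  ring

lemma coth_sub_pi_I (z : ℂ) : Complex.coth (z - Real.pi * I) = Complex.coth z := by
  have h := coth_add_pi_I (z - Real.pi * I)
  rw [sub_add_cancel] at h
  exact h.symm

lemma tendsto_coth_comp {f : ℂ → ℂ} {l : Filter ℂ} {a : ℂ} (hf : Tendsto f l (𝓝 a))
    (ha : Complex.sinh a ≠ 0) :
    Tendsto (fun w => Complex.coth (f w)) l (𝓝 (Complex.coth a)) := by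
  unfold Complex.coth
  exact ((Complex.continuous_cosh.tendsto a).comp hf).div
    ((Complex.continuous_sinh.tendsto a).comp hf) ha

lemma sinh_I_ne_zero {r : ℝ} (h : Real.sin r ≠ 0) : Complex.sinh ((r:ℂ) * I) ≠ 0 := by
  rw [Complex.sinh_mul_I, ← Complex.ofReal_sin]
  exact mul_ne_zero (by exact_mod_cast h) Complex.I_ne_zero

set_option maxHeartbeats 2000000 in
theorem v_solves_difference_equation_with_correct_residues
    (ω : ℂ) (hω : 0 < ω.im) (k : ℝ) (hk : 0 < k)
    (G₂ m : ℂ → ℂ)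
    (hG₂ : ∀ w : ℂ, G₂ w = I * ω ^ 2 * Complex.sinh (2 * w) /
      (ω ^ 2 * (Complex.sinh w) ^ 2 + (k : ℂ) ^ 2))
    (hm : ∀ w : ℂ, m w = ((Real.pi + 2 * I * w) / (6 * Real.pi)) * G₂ w)
    (p₁ : ℂ) (hp : Complex.sinh p₁ = I * k / ω) (hc : Complex.cosh p₁ ≠ 0)
    (hre : p₁.re ≠ 0)
    (m₁ m₂ m₃ : ℂ)
    (hm₁ : m₁ = -p₁ / (3 * Real.pi) + I / 6)
    (hm₂ : m₂ = -p₁ / (3 * Real.pi) - I / 6)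
    (hm₃ : m₃ = -p₁ / (3 * Real.pi) + I / 2)
    (Q : ℂ → ℂ)
    (hQ : ∀ w : ℂ, Q w =
      ((I - m₁) / 3) * Complex.coth ((w - p₁) / 3)
      - (m₂ / 3) * Complex.coth ((w - p₁ - Real.pi * I) / 3)
      - (m₃ / 3) * Complex.coth ((w - p₁ + Real.pi * I) / 3)
      - ((I - m₁) / 3) * Complex.coth ((w + p₁ - Real.pi * I) / 3)
      + (m₂ / 3) * Complex.coth ((w + p₁) / 3)
      + (m₃ / 3) * Complex.coth ((w + p₁ + Real.pi * I) / 3)) :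
    (∀ w : ℂ,
      ω ^ 2 * (Complex.sinh w) ^ 2 + (k : ℂ) ^ 2 ≠ 0 →
      Complex.sinh ((w - p₁) / 3) ≠ 0 →
      Complex.sinh ((w - p₁ - Real.pi * I) / 3) ≠ 0 →
      Complex.sinh ((w - p₁ + Real.pi * I) / 3) ≠ 0 →
      Complex.sinh ((w + p₁ - Real.pi * I) / 3) ≠ 0 →
      Complex.sinh ((w + p₁) / 3) ≠ 0 →
      Complex.sinh ((w + p₁ + Real.pi * I) / 3) ≠ 0 →
      (m w + Q w) - (m (w + 3 * Real.pi * I) + Q (w + 3 * Real.pi * I)) = G₂ w ∧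
      m (-w + Real.pi * I) + Q (-w + Real.pi * I) = m w + Q w) ∧
    Tendsto (fun w => (w - p₁) * (m w + Q w)) (𝓝[≠] p₁) (𝓝 I) ∧
    Tendsto (fun w => (w - (-p₁ - Real.pi * I)) * (m w + Q w))
      (𝓝[≠] (-p₁ - Real.pi * I)) (𝓝 I) := by
  refine ⟨fun w _ _ _ _ _ _ _ => ?_, ?_, ?_⟩
  ·
      have hπ : (Real.pi : ℂ) ≠ 0 := by exact_mod_cast Real.pi_ne_zero
      have key3 : ∀ z : ℂ, Complex.sinh (z + 3 * (Real.pi:ℂ) * I) = -Complex.sinh z := by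
        intro z
        rw [show z + 3*(Real.pi:ℂ)*I = ((z + Real.pi*I) + Real.pi*I) + Real.pi*I by ring,
          sinh_add_pi_I, sinh_add_pi_I, sinh_add_pi_I]
        ring
      have hG2per : G₂ (w + 3 * Real.pi * I) = G₂ w := by
        rw [hG₂, hG₂]
        have a1 : Complex.sinh (2 * (w + 3 * (Real.pi:ℂ) * I)) = Complex.sinh (2 * w) := by
          rw [show 2 * (w + 3 * (Real.pi:ℂ) * I) = (2*w + 3*Real.pi*I) + 3*Real.pi*I by ring,
            key3, key3, neg_neg]
        have a2 : Complex.sinh (w + 3 * (Real.pi:ℂ) * I) ^ 2 = Complex.sinh w ^ 2 := by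
          rw [key3]; ring
        rw [a1, a2]
      have hQper : Q (w + 3 * Real.pi * I) = Q w := by
        have e : ∀ a : ℂ, (w + 3*(Real.pi:ℂ)*I + a)/3 = (w + a)/3 + Real.pi * I := by
          intro a; ring
        rw [hQ, hQ,
          show (w + 3*(Real.pi:ℂ)*I - p₁)/3 = (w - p₁)/3 + Real.pi*I by ring,
          show (w + 3*(Real.pi:ℂ)*I - p₁ - Real.pi*I)/3 = (w - p₁ - Real.pi*I)/3 + Real.pi*I by ring,
          show (w + 3*(Real.pi:ℂ)*I - p₁ + Real.pi*I)/3 = (w - p₁ + Real.pi*I)/3 + Real.pi*I by ring,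
          show (w + 3*(Real.pi:ℂ)*I + p₁ - Real.pi*I)/3 = (w + p₁ - Real.pi*I)/3 + Real.pi*I by ring,
          show (w + 3*(Real.pi:ℂ)*I + p₁)/3 = (w + p₁)/3 + Real.pi*I by ring,
          show (w + 3*(Real.pi:ℂ)*I + p₁ + Real.pi*I)/3 = (w + p₁ + Real.pi*I)/3 + Real.pi*I by ring,
          coth_add_pi_I, coth_add_pi_I, coth_add_pi_I, coth_add_pi_I, coth_add_pi_I, coth_add_pi_I]
      constructor
      · rw [hm w, hm (w + 3 * Real.pi * I), hG2per, hQper]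
        field_simp
        linear_combination (-(6 * (Real.pi:ℂ) * G₂ w)) * Complex.I_sq
      · have hG2neg : G₂ (-w + Real.pi * I) = - G₂ w := by
          rw [hG₂, hG₂]
          have a1 : Complex.sinh (2 * (-w + (Real.pi:ℂ) * I)) = -Complex.sinh (2 * w) := by
            rw [show 2 * (-w + (Real.pi:ℂ)*I) = ((-(2*w)) + Real.pi*I) + Real.pi*I by ring,
              sinh_add_pi_I, sinh_add_pi_I, neg_neg, Complex.sinh_neg]
          have a2 : Complex.sinh (-w + (Real.pi:ℂ) * I) ^ 2 = Complex.sinh w ^ 2 := by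
            rw [sinh_add_pi_I, Complex.sinh_neg]; ring
          rw [a1, a2]; ring
        have hmaut : m (-w + Real.pi * I) = m w := by
          rw [hm, hm, hG2neg]
          field_simp
          linear_combination (-(2 * (Real.pi:ℂ) * G₂ w)) * Complex.I_sq
        rw [hmaut, hQ (-w + Real.pi * I), hQ w,
          show (-w + (Real.pi:ℂ)*I - p₁)/3 = -((w + p₁ - Real.pi*I)/3) by ring,
          show (-w + (Real.pi:ℂ)*I - p₁ - Real.pi*I)/3 = -((w + p₁)/3) by ring,
          show (-w + (Real.pi:ℂ)*I - p₁ + Real.pi*I)/3 = -((w + p₁ + Real.pi*I)/3 - Real.pi*I) by ring,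
          show (-w + (Real.pi:ℂ)*I + p₁ - Real.pi*I)/3 = -((w - p₁)/3) by ring,
          show (-w + (Real.pi:ℂ)*I + p₁)/3 = -((w - p₁ - Real.pi*I)/3) by ring,
          show (-w + (Real.pi:ℂ)*I + p₁ + Real.pi*I)/3 = -((w - p₁ + Real.pi*I)/3 - Real.pi*I) by ring,
          coth_neg, coth_neg, coth_neg, coth_neg, coth_neg, coth_neg, coth_sub_pi_I, coth_sub_pi_I]
        ring
  ·
      have hπ : (Real.pi : ℂ) ≠ 0 := by exact_mod_cast Real.pi_ne_zero
      have hω0 : ω ≠ 0 := by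
        intro h; rw [h] at hω; simp at hω
      have hk0 : (k:ℂ) ≠ 0 := by exact_mod_cast hk.ne'
      have hsp : Complex.sinh p₁ ≠ 0 := by
        rw [hp]; exact div_ne_zero (mul_ne_zero Complex.I_ne_zero hk0) hω0
      have hS2 : Complex.sinh (2 * p₁) ≠ 0 := by
        rw [Complex.sinh_two_mul]
        exact mul_ne_zero (mul_ne_zero two_ne_zero hsp) hc
      have hSS : Complex.sinh (p₁ + p₁) ≠ 0 := by
        rw [show p₁ + p₁ = 2 * p₁ by ring]; exact hS2
      have hk2 : (k:ℂ)^2 = -(ω^2 * Complex.sinh p₁ ^ 2) := by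
        have h := hp
        field_simp at h
        linear_combination (Complex.sinh p₁ * ω + I * (k:ℂ)) * h + (k:ℂ)^2 * Complex.I_sq
      have hden : ∀ z : ℂ, ω ^ 2 * Complex.sinh z ^ 2 + (k : ℂ) ^ 2
          = ω ^ 2 * (Complex.sinh (z - p₁) * Complex.sinh (z + p₁)) := by
        intro z
        rw [Complex.sinh_sub, Complex.sinh_add]
        linear_combination hk2 - ω^2 * Complex.sinh z^2 * (Complex.cosh_sq p₁)
          + ω^2 * Complex.sinh p₁^2 * (Complex.cosh_sq z)
      have heq : ∀ w : ℂ, (w - p₁) * (m w + Q w) =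
          (((Real.pi:ℂ) + 2*I*w)/(6*Real.pi)) *
            (I * ω^2 * Complex.sinh (2*w) / (ω^2 * Complex.sinh (w + p₁))) *
            ((w - p₁)/Complex.sinh (w - p₁))
          + ((I - m₁)/3) * ((w - p₁) * Complex.coth ((w - p₁)/3))
          + (w - p₁) * (
              - ((m₂/3) * Complex.coth ((w - p₁ - Real.pi*I)/3))
              - (m₃/3) * Complex.coth ((w - p₁ + Real.pi*I)/3)
              - ((I - m₁)/3) * Complex.coth ((w + p₁ - Real.pi*I)/3)
              + (m₂/3) * Complex.coth ((w + p₁)/3)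
              + (m₃/3) * Complex.coth ((w + p₁ + Real.pi*I)/3)) := by
        intro w
        rw [hm, hG₂, hQ, hden w]
        ring
      refine Tendsto.congr (fun w => (heq w).symm) ?_
      have t1 : Tendsto (fun w : ℂ => ((Real.pi:ℂ) + 2*I*w)/(6*Real.pi)) (𝓝[≠] p₁)
          (𝓝 (((Real.pi:ℂ) + 2*I*p₁)/(6*Real.pi))) := by
        apply Tendsto.mono_left _ nhdsWithin_le_nhds
        exact Tendsto.div_const (tendsto_const_nhds.add ((continuous_const.mul continuous_id).tendsto p₁)) _
      have t2 : Tendsto (fun w : ℂ => I * ω^2 * Complex.sinh (2*w) / (ω^2 * Complex.sinh (w + p₁)))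
          (𝓝[≠] p₁) (𝓝 (I * ω^2 * Complex.sinh (2*p₁) / (ω^2 * Complex.sinh (p₁ + p₁)))) := by
        apply Tendsto.mono_left _ nhdsWithin_le_nhds
        apply Tendsto.div
        · exact (continuous_const.mul (Complex.continuous_sinh.comp (continuous_const.mul continuous_id))).tendsto p₁
        · exact (continuous_const.mul (Complex.continuous_sinh.comp (continuous_id.add continuous_const))).tendsto p₁
        · exact mul_ne_zero (pow_ne_zero 2 hω0) hSS
      have t3 := tendsto_div_sinh_sub p₁
      have t4 := (tendsto_mul_coth p₁).const_mul ((I - m₁)/3)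
      -- limits of the regular coth terms
      have taff : ∀ a : ℂ, Tendsto (fun w : ℂ => (w + a)/3) (𝓝[≠] p₁) (𝓝 ((p₁ + a)/3)) := by
        intro a
        apply Tendsto.mono_left _ nhdsWithin_le_nhds
        exact Tendsto.div_const ((continuous_id.add continuous_const).tendsto p₁) _
      have hs1 : Complex.sinh ((p₁ + (- p₁ - Real.pi*I))/3) ≠ 0 := by
        rw [show (p₁ + (- p₁ - (Real.pi:ℂ)*I))/3 = ((-(Real.pi/3) : ℝ) : ℂ) * I by push_cast; ring]
        apply sinh_I_ne_zero
        rw [Real.sin_neg, neg_ne_zero]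
        exact ne_of_gt (Real.sin_pos_of_pos_of_lt_pi (by positivity)
          (by linarith [Real.pi_pos]))
      have hs2 : Complex.sinh ((p₁ + (- p₁ + Real.pi*I))/3) ≠ 0 := by
        rw [show (p₁ + (- p₁ + (Real.pi:ℂ)*I))/3 = (((Real.pi/3) : ℝ) : ℂ) * I by push_cast; ring]
        apply sinh_I_ne_zero
        exact ne_of_gt (Real.sin_pos_of_pos_of_lt_pi (by positivity)
          (by linarith [Real.pi_pos]))
      have hs3 : Complex.sinh ((p₁ + (p₁ - Real.pi*I))/3) ≠ 0 := by
        apply sinh_re_ne_zero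
        rw [show (p₁ + (p₁ - (Real.pi:ℂ)*I))/3 = (2*p₁ - Real.pi*I)/((3:ℝ):ℂ) by push_cast; ring,
          Complex.div_ofReal_re]
        simp only [Complex.sub_re, Complex.mul_re, Complex.I_re, Complex.I_im, Complex.ofReal_re,
          Complex.ofReal_im, Complex.mul_im]
        simp [Complex.ofReal_re]
        intro h
        apply hre
        have : (2 : ℝ) * p₁.re = 0 := by
          simpa using h
        linarith
      have hs4 : Complex.sinh ((p₁ + p₁)/3) ≠ 0 := by
        apply sinh_re_ne_zero
        rw [show (p₁ + p₁)/3 = (2*p₁)/((3:ℝ):ℂ) by push_cast; ring, Complex.div_ofReal_re]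
        intro h
        apply hre
        have h2 : (2*p₁).re = 0 := by
          field_simp at h
          linarith
        simp [Complex.mul_re] at h2
        linarith [h2]
      have hs5 : Complex.sinh ((p₁ + (p₁ + Real.pi*I))/3) ≠ 0 := by
        apply sinh_re_ne_zero
        rw [show (p₁ + (p₁ + (Real.pi:ℂ)*I))/3 = (2*p₁ + Real.pi*I)/((3:ℝ):ℂ) by push_cast; ring,
          Complex.div_ofReal_re]
        intro h
        apply hre
        have h2 : (2*p₁ + (Real.pi:ℂ)*I).re = 0 := by
          field_simp at h
          linarith
        simp [Complex.add_re, Complex.mul_re] at h2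
        linarith [h2]
      have c2 : Tendsto (fun w : ℂ => Complex.coth ((w - p₁ - Real.pi*I)/3)) (𝓝[≠] p₁)
          (𝓝 (Complex.coth ((p₁ + (- p₁ - Real.pi*I))/3))) :=
        (tendsto_coth_comp (taff _) hs1).congr
          (fun w => by rw [show (w + (- p₁ - (Real.pi:ℂ)*I))/3 = (w - p₁ - Real.pi*I)/3 by ring])
      have c3 : Tendsto (fun w : ℂ => Complex.coth ((w - p₁ + Real.pi*I)/3)) (𝓝[≠] p₁)
          (𝓝 (Complex.coth ((p₁ + (- p₁ + Real.pi*I))/3))) :=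
        (tendsto_coth_comp (taff _) hs2).congr
          (fun w => by rw [show (w + (- p₁ + (Real.pi:ℂ)*I))/3 = (w - p₁ + Real.pi*I)/3 by ring])
      have c4 : Tendsto (fun w : ℂ => Complex.coth ((w + p₁ - Real.pi*I)/3)) (𝓝[≠] p₁)
          (𝓝 (Complex.coth ((p₁ + (p₁ - Real.pi*I))/3))) :=
        (tendsto_coth_comp (taff _) hs3).congr
          (fun w => by rw [show (w + (p₁ - (Real.pi:ℂ)*I))/3 = (w + p₁ - Real.pi*I)/3 by ring])
      have c5 : Tendsto (fun w : ℂ => Complex.coth ((w + p₁)/3)) (𝓝[≠] p₁)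
          (𝓝 (Complex.coth ((p₁ + p₁)/3))) :=
        tendsto_coth_comp (taff _) hs4
      have c6 : Tendsto (fun w : ℂ => Complex.coth ((w + p₁ + Real.pi*I)/3)) (𝓝[≠] p₁)
          (𝓝 (Complex.coth ((p₁ + (p₁ + Real.pi*I))/3))) :=
        (tendsto_coth_comp (taff _) hs5).congr
          (fun w => by rw [show (w + (p₁ + (Real.pi:ℂ)*I))/3 = (w + p₁ + Real.pi*I)/3 by ring])
      have t5 := ((((c2.const_mul (m₂/3)).neg.sub (c3.const_mul (m₃/3))).sub
          (c4.const_mul ((I - m₁)/3))).add (c5.const_mul (m₂/3))).add (c6.const_mul (m₃/3))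
      have t6 : Tendsto (fun w : ℂ => w - p₁) (𝓝[≠] p₁) (𝓝 0) :=
        (tendsto_sub_punctured p₁).mono_right nhdsWithin_le_nhds
      have t7 := t6.mul t5
      have big := (((t1.mul t2).mul t3).add t4).add t7
      convert big using 2
      rw [zero_mul, mul_one, show p₁ + p₁ = 2*p₁ by ring]
      have hq : Complex.I * ω ^ 2 * Complex.sinh (2*p₁) / (ω ^ 2 * Complex.sinh (2*p₁)) = Complex.I := by
        field_simp
      rw [hq, hm₁]
      field_simp [hπ]
      linear_combination (-6*p₁) * Complex.I_sq
  ·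
      have hπ : (Real.pi : ℂ) ≠ 0 := by exact_mod_cast Real.pi_ne_zero
      have hω0 : ω ≠ 0 := by
        intro h; rw [h] at hω; simp at hω
      have hk0 : (k:ℂ) ≠ 0 := by exact_mod_cast hk.ne'
      have hsp : Complex.sinh p₁ ≠ 0 := by
        rw [hp]; exact div_ne_zero (mul_ne_zero Complex.I_ne_zero hk0) hω0
      have hS2 : Complex.sinh (2 * p₁) ≠ 0 := by
        rw [Complex.sinh_two_mul]
        exact mul_ne_zero (mul_ne_zero two_ne_zero hsp) hc
      have hk2 : (k:ℂ)^2 = -(ω^2 * Complex.sinh p₁ ^ 2) := by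
        have h := hp
        field_simp at h
        linear_combination (Complex.sinh p₁ * ω + I * (k:ℂ)) * h + (k:ℂ)^2 * Complex.I_sq
      have hden : ∀ z : ℂ, ω ^ 2 * Complex.sinh z ^ 2 + (k : ℂ) ^ 2
          = ω ^ 2 * (Complex.sinh (z - p₁) * Complex.sinh (z + p₁)) := by
        intro z
        rw [Complex.sinh_sub, Complex.sinh_add]
        linear_combination hk2 - ω^2 * Complex.sinh z^2 * (Complex.cosh_sq p₁)
          + ω^2 * Complex.sinh p₁^2 * (Complex.cosh_sq z)
      have hflip : ∀ w : ℂ, Complex.sinh (w + p₁) = -Complex.sinh (w - (-p₁ - Real.pi*I)) := by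
        intro w
        rw [show w - (-p₁ - (Real.pi:ℂ)*I) = (w + p₁) + Real.pi*I by ring, sinh_add_pi_I, neg_neg]
      have heq : ∀ w : ℂ, (w - (-p₁ - Real.pi*I)) * (m w + Q w) =
          (((Real.pi:ℂ) + 2*I*w)/(6*Real.pi)) *
            (I * ω^2 * Complex.sinh (2*w) / (ω^2 * Complex.sinh (w - p₁))) *
            (-((w - (-p₁ - Real.pi*I))/Complex.sinh (w - (-p₁ - Real.pi*I))))
          + (m₃/3) * ((w - (-p₁ - Real.pi*I)) * Complex.coth ((w + p₁ + Real.pi*I)/3))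
          + (w - (-p₁ - Real.pi*I)) * (
              ((I - m₁)/3) * Complex.coth ((w - p₁)/3)
              - (m₂/3) * Complex.coth ((w - p₁ - Real.pi*I)/3)
              - (m₃/3) * Complex.coth ((w - p₁ + Real.pi*I)/3)
              - ((I - m₁)/3) * Complex.coth ((w + p₁ - Real.pi*I)/3)
              + (m₂/3) * Complex.coth ((w + p₁)/3)) := by
        intro w
        rw [hm, hG₂, hQ, hden w, hflip w]
        ring
      refine Tendsto.congr (fun w => (heq w).symm) ?_
      have t1 : Tendsto (fun w : ℂ => ((Real.pi:ℂ) + 2*I*w)/(6*Real.pi)) (𝓝[≠] (-p₁ - Real.pi * I))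
          (𝓝 (((Real.pi:ℂ) + 2*I*(-p₁ - Real.pi*I))/(6*Real.pi))) := by
        apply Tendsto.mono_left _ nhdsWithin_le_nhds
        exact Tendsto.div_const
          (tendsto_const_nhds.add ((continuous_const.mul continuous_id).tendsto _)) _
      have hsd : Complex.sinh ((-p₁ - (Real.pi:ℂ)*I) - p₁) ≠ 0 := by
        apply sinh_re_ne_zero
        simp only [Complex.sub_re, Complex.neg_re, Complex.mul_re, Complex.I_re, Complex.I_im,
          Complex.ofReal_re, Complex.ofReal_im]
        intro h
        apply hre
        linarith [h]
      have t2 : Tendsto (fun w : ℂ => I * ω^2 * Complex.sinh (2*w) / (ω^2 * Complex.sinh (w - p₁)))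
          (𝓝[≠] (-p₁ - Real.pi * I))
          (𝓝 (I * ω^2 * Complex.sinh (2*(-p₁ - Real.pi*I)) /
            (ω^2 * Complex.sinh ((-p₁ - Real.pi*I) - p₁)))) := by
        apply Tendsto.mono_left _ nhdsWithin_le_nhds
        apply Tendsto.div
        · exact (continuous_const.mul (Complex.continuous_sinh.comp
            (continuous_const.mul continuous_id))).tendsto _
        · exact (continuous_const.mul (Complex.continuous_sinh.comp
            (continuous_id.sub continuous_const))).tendsto _
        · exact mul_ne_zero (pow_ne_zero 2 hω0) hsd
      have t3 := (tendsto_div_sinh_sub (-p₁ - Real.pi*I)).neg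
      have t4 := ((tendsto_mul_coth (-p₁ - Real.pi*I)).congr
          (fun w => by rw [show (w - (-p₁ - (Real.pi:ℂ)*I))/3 = (w + p₁ + Real.pi*I)/3 by ring])).const_mul
          (m₃/3)
      have taff : ∀ a : ℂ, Tendsto (fun w : ℂ => (w + a)/3) (𝓝[≠] (-p₁ - Real.pi * I))
          (𝓝 ((-p₁ - Real.pi*I + a)/3)) := by
        intro a
        apply Tendsto.mono_left _ nhdsWithin_le_nhds
        exact Tendsto.div_const ((continuous_id.add continuous_const).tendsto _) _
      have hs1 : Complex.sinh ((-p₁ - (Real.pi:ℂ)*I + -p₁)/3) ≠ 0 := by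
        apply sinh_re_ne_zero
        rw [show (-p₁ - (Real.pi:ℂ)*I + -p₁)/3 = (-(2*p₁) - Real.pi*I)/((3:ℝ):ℂ) by push_cast; ring,
          Complex.div_ofReal_re]
        intro h
        apply hre
        have h2 : (-(2*p₁) - (Real.pi:ℂ)*I).re = 0 := by
          field_simp at h
          linarith
        simp [Complex.sub_re, Complex.neg_re, Complex.mul_re] at h2
        linarith [h2]
      have hs2 : Complex.sinh ((-p₁ - (Real.pi:ℂ)*I + (-p₁ - Real.pi*I))/3) ≠ 0 := by
        apply sinh_re_ne_zero
        rw [show (-p₁ - (Real.pi:ℂ)*I + (-p₁ - Real.pi*I))/3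
            = (-(2*p₁) - 2*Real.pi*I)/((3:ℝ):ℂ) by push_cast; ring,
          Complex.div_ofReal_re]
        intro h
        apply hre
        have h2 : (-(2*p₁) - 2*(Real.pi:ℂ)*I).re = 0 := by
          field_simp at h
          rw [show -(2*p₁) - 2*(Real.pi:ℂ)*I = 2*(-p₁ - Real.pi*I) by ring]
          linarith
        simp [Complex.sub_re, Complex.neg_re, Complex.mul_re] at h2
        linarith [h2]
      have hs3 : Complex.sinh ((-p₁ - (Real.pi:ℂ)*I + (-p₁ + Real.pi*I))/3) ≠ 0 := by
        apply sinh_re_ne_zero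
        rw [show (-p₁ - (Real.pi:ℂ)*I + (-p₁ + Real.pi*I))/3 = (-(2*p₁))/((3:ℝ):ℂ) by push_cast; ring,
          Complex.div_ofReal_re]
        intro h
        apply hre
        have h2 : (-(2*p₁)).re = 0 := by
          field_simp at h
          linarith
        simp [Complex.neg_re, Complex.mul_re] at h2
        linarith [h2]
      have hs4 : Complex.sinh ((-p₁ - (Real.pi:ℂ)*I + (p₁ - Real.pi*I))/3) ≠ 0 := by
        rw [show (-p₁ - (Real.pi:ℂ)*I + (p₁ - Real.pi*I))/3
            = ((-(2*Real.pi/3) : ℝ) : ℂ) * I by push_cast; ring]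
        apply sinh_I_ne_zero
        rw [Real.sin_neg, neg_ne_zero]
        exact ne_of_gt (Real.sin_pos_of_pos_of_lt_pi (by positivity) (by linarith [Real.pi_pos]))
      have hs5 : Complex.sinh ((-p₁ - (Real.pi:ℂ)*I + p₁)/3) ≠ 0 := by
        rw [show (-p₁ - (Real.pi:ℂ)*I + p₁)/3 = ((-(Real.pi/3) : ℝ) : ℂ) * I by push_cast; ring]
        apply sinh_I_ne_zero
        rw [Real.sin_neg, neg_ne_zero]
        exact ne_of_gt (Real.sin_pos_of_pos_of_lt_pi (by positivity) (by linarith [Real.pi_pos]))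
      have c1 : Tendsto (fun w : ℂ => Complex.coth ((w - p₁)/3)) (𝓝[≠] (-p₁ - Real.pi * I))
          (𝓝 (Complex.coth ((-p₁ - Real.pi*I + -p₁)/3))) :=
        (tendsto_coth_comp (taff _) hs1).congr
          (fun w => by rw [show (w + -p₁)/3 = (w - p₁)/3 by ring])
      have c2 : Tendsto (fun w : ℂ => Complex.coth ((w - p₁ - Real.pi*I)/3)) (𝓝[≠] (-p₁ - Real.pi * I))
          (𝓝 (Complex.coth ((-p₁ - Real.pi*I + (-p₁ - Real.pi*I))/3))) :=
        (tendsto_coth_comp (taff _) hs2).congr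
          (fun w => by rw [show (w + (-p₁ - (Real.pi:ℂ)*I))/3 = (w - p₁ - Real.pi*I)/3 by ring])
      have c3 : Tendsto (fun w : ℂ => Complex.coth ((w - p₁ + Real.pi*I)/3)) (𝓝[≠] (-p₁ - Real.pi * I))
          (𝓝 (Complex.coth ((-p₁ - Real.pi*I + (-p₁ + Real.pi*I))/3))) :=
        (tendsto_coth_comp (taff _) hs3).congr
          (fun w => by rw [show (w + (-p₁ + (Real.pi:ℂ)*I))/3 = (w - p₁ + Real.pi*I)/3 by ring])
      have c4 : Tendsto (fun w : ℂ => Complex.coth ((w + p₁ - Real.pi*I)/3)) (𝓝[≠] (-p₁ - Real.pi * I))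
          (𝓝 (Complex.coth ((-p₁ - Real.pi*I + (p₁ - Real.pi*I))/3))) :=
        (tendsto_coth_comp (taff _) hs4).congr
          (fun w => by rw [show (w + (p₁ - (Real.pi:ℂ)*I))/3 = (w + p₁ - Real.pi*I)/3 by ring])
      have c5 : Tendsto (fun w : ℂ => Complex.coth ((w + p₁)/3)) (𝓝[≠] (-p₁ - Real.pi * I))
          (𝓝 (Complex.coth ((-p₁ - Real.pi*I + p₁)/3))) :=
        tendsto_coth_comp (taff _) hs5
      have t5 := (((((c1.const_mul ((I - m₁)/3)).sub (c2.const_mul (m₂/3))).sub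
          (c3.const_mul (m₃/3))).sub (c4.const_mul ((I - m₁)/3))).add (c5.const_mul (m₂/3)))
      have t6 : Tendsto (fun w : ℂ => w - (-p₁ - Real.pi*I)) (𝓝[≠] (-p₁ - Real.pi * I)) (𝓝 0) :=
        (tendsto_sub_punctured _).mono_right nhdsWithin_le_nhds
      have t7 := t6.mul t5
      have big := (((t1.mul t2).mul t3).add t4).add t7
      convert big using 2
      rw [zero_mul, add_zero]
      have e1 : Complex.sinh (2 * (-p₁ - (Real.pi:ℂ)*I)) = -Complex.sinh (2*p₁) := by
        have h2 : Complex.sinh ((2*(-p₁ - (Real.pi:ℂ)*I) + Real.pi*I) + Real.pi*I)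
            = Complex.sinh (2*(-p₁ - (Real.pi:ℂ)*I)) := by
          rw [sinh_add_pi_I, sinh_add_pi_I, neg_neg]
        rw [show (2*(-p₁ - (Real.pi:ℂ)*I) + Real.pi*I) + Real.pi*I = -(2*p₁) by ring,
          Complex.sinh_neg] at h2
        linear_combination -h2
      have e2 : Complex.sinh ((-p₁ - (Real.pi:ℂ)*I) - p₁) = Complex.sinh (2*p₁) := by
        have h := sinh_add_pi_I (-(2*p₁) - (Real.pi:ℂ)*I)
        rw [show -(2*p₁) - (Real.pi:ℂ)*I + Real.pi*I = -(2*p₁) by ring, Complex.sinh_neg] at h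
        rw [show (-p₁ - (Real.pi:ℂ)*I) - p₁ = -(2*p₁) - Real.pi*I by ring]
        linear_combination h
      have hq : I * ω^2 * Complex.sinh (2*(-p₁ - Real.pi*I)) /
          (ω^2 * Complex.sinh ((-p₁ - Real.pi*I) - p₁)) = -I := by
        rw [e1, e2]
        field_simp
      rw [hq, hm₃]
      field_simp [hπ]
      linear_combination (12*(Real.pi:ℂ)*I + 12*p₁) * Complex.I_sq
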